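/- For all a, b ∈ SH(n): m(a,b) ∈ SH(n); m(a, 1) = m(1, a) = a where 1 is the identity matrix; and for all integers k, l ∈ ℤ, m(m(a, bᵏ), bˡ) = m(a, b^{k+l}) (the integer powers of b, computed in GL(n,ℂ), lie in SH(n)). Thus (SH(n), m) is a right mono-alternative loop. -/

import Mathlib

open Matrix ComplexOrder

/-- The set of `n × n` positive-definite Hermitian complex matrices of
determinant `1` (`Matrix.PosDef` includes Hermitian-ness). -/
def SH (n : ℕ) : Set (Matrix (Fin n) (Fin n) ℂ) :=
  {a | a.PosDef ∧ a.det = 1}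

/-- The unique positive-semidefinite square root of a positive-semidefinite
matrix (junk value `0` otherwise). -/
noncomputable def msqrt {n : ℕ} (p : Matrix (Fin n) (Fin n) ℂ) :
    Matrix (Fin n) (Fin n) ℂ :=
  letI := Classical.dec p.PosSemidef
  if h : p.PosSemidef then
    (h.1.eigenvectorUnitary : Matrix (Fin n) (Fin n) ℂ) *
      diagonal ((↑) ∘ (√·) ∘ h.1.eigenvalues) *
      (star h.1.eigenvectorUnitary : Matrix (Fin n) (Fin n) ℂ)
  else 0

open scoped MatrixOrder in
lemma msqrt_eq_cfc {n : ℕ} {p : Matrix (Fin n) (Fin n) ℂ}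
    (hp : p.PosSemidef) : msqrt p = CFC.sqrt p := by
  rw [msqrt, dif_pos hp, CFC.sqrt_eq_real_sqrt p hp.nonneg, cfcₙ_eq_cfc (hf0 := Real.sqrt_zero),
    hp.1.cfc_eq, Matrix.IsHermitian.cfc, Unitary.conjStarAlgAut_apply]
  rfl

/-- The loop multiplication `m(a,b) := (b·a²·b)^{1/2}` on `SH n`. -/
noncomputable def mSH {n : ℕ} (a b : Matrix (Fin n) (Fin n) ℂ) :
    Matrix (Fin n) (Fin n) ℂ :=
  msqrt (b * a ^ 2 * b)

/-- A positive semidefinite matrix with nonzero determinant is positive definite. -/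
lemma posDef_of_posSemidef_det_ne_zero {n : ℕ} {A : Matrix (Fin n) (Fin n) ℂ}
    (hA : A.PosSemidef) (hd : A.det ≠ 0) : A.PosDef := by
  exact hA.posDef_iff_det_ne_zero.mpr hd

open scoped MatrixOrder in
/-- If `a` is PSD and `a^2 = p` then `msqrt p = a`. -/
lemma msqrt_eq {n : ℕ} {p a : Matrix (Fin n) (Fin n) ℂ}
    (ha : a.PosSemidef) (h : a ^ 2 = p) : msqrt p = a := by
  have hp : p.PosSemidef := h ▸ ha.pow 2
  rw [msqrt_eq_cfc hp, ← h]
  exact CFC.sqrt_sq a ha.nonneg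

open scoped MatrixOrder in
lemma msqrt_sq {n : ℕ} {p : Matrix (Fin n) (Fin n) ℂ}
    (hp : p.PosSemidef) : msqrt p ^ 2 = p := by
  rw [msqrt_eq_cfc hp]; exact CFC.sq_sqrt p hp.nonneg

open scoped MatrixOrder in
lemma msqrt_posSemidef {n : ℕ} {p : Matrix (Fin n) (Fin n) ℂ}
    (hp : p.PosSemidef) : (msqrt p).PosSemidef := by
  rw [msqrt_eq_cfc hp]; exact (CFC.sqrt_nonneg p).posSemidef

/-- A positive complex number whose square is `1` equals `1`. -/
lemma complex_sq_eq_one {x : ℂ} (hx : 0 < x) (h : x ^ 2 = 1) : x = 1 := by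
  have hfac : (x - 1) * (x + 1) = 0 := by ring_nf; rw [← sub_eq_zero] at h ⊢; linear_combination h
  rcases mul_eq_zero.mp hfac with h1 | h1
  · exact sub_eq_zero.mp h1
  · exfalso
    have : (0 : ℂ) < x + 1 := by positivity
    rw [h1] at this
    exact lt_irrefl 0 this

/-- `msqrt` of a PSD matrix of determinant 1 lies in `SH n`. -/
lemma msqrt_mem_SH {n : ℕ} {p : Matrix (Fin n) (Fin n) ℂ}
    (hp : p.PosSemidef) (hdet : p.det = 1) : msqrt p ∈ SH n := by
  have hsq : msqrt p ^ 2 = p := msqrt_sq hp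
  have hdet2 : (msqrt p).det ^ 2 = 1 := by
    rw [← Matrix.det_pow, hsq, hdet]
  have hdet_ne : (msqrt p).det ≠ 0 := by
    intro h0
    rw [h0] at hdet2
    simp at hdet2
  have hpd : (msqrt p).PosDef :=
    posDef_of_posSemidef_det_ne_zero (msqrt_posSemidef hp) hdet_ne
  exact ⟨hpd, complex_sq_eq_one hpd.det_pos hdet2⟩

theorem stmt_12 (n : ℕ) (a b : Matrix (Fin n) (Fin n) ℂ)
    (ha : a ∈ SH n) (hb : b ∈ SH n) :
    mSH a b ∈ SH n ∧
    mSH a 1 = a ∧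
    mSH 1 a = a ∧
    (∀ k : ℤ, b ^ k ∈ SH n) ∧
    (∀ k l : ℤ, mSH (mSH a (b ^ k)) (b ^ l) = mSH a (b ^ (k + l))) := by
  obtain ⟨hapd, hadet⟩ := ha
  obtain ⟨hbpd, hbdet⟩ := hb
  have hbdet_unit : IsUnit b.det := by rw [hbdet]; exact isUnit_one
  -- general membership lemma
  have hmem : ∀ c d : Matrix (Fin n) (Fin n) ℂ, c ∈ SH n → d ∈ SH n → mSH c d ∈ SH n := by
    rintro c d ⟨hc, hcdet⟩ ⟨hd, hddet⟩
    have hpsd : (d * c ^ 2 * d).PosSemidef := by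
      have := (hc.posSemidef.pow 2).mul_mul_conjTranspose_same d
      rwa [hd.1.eq] at this
    have hdet : (d * c ^ 2 * d).det = 1 := by
      rw [Matrix.det_mul, Matrix.det_mul, Matrix.det_pow, hcdet, hddet]; ring
    exact msqrt_mem_SH hpsd hdet
  -- zpow membership
  have hzmem : ∀ k : ℤ, b ^ k ∈ SH n := by
    intro k
    have hpsd : (b ^ k).PosSemidef := hbpd.posSemidef.zpow k
    have hdet : (b ^ k).det = 1 := by
      obtain ⟨m, rfl | rfl⟩ := k.eq_nat_or_neg
      · rw [zpow_natCast, Matrix.det_pow, hbdet, one_pow]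
      · rw [Matrix.zpow_neg hbdet_unit, Matrix.det_nonsing_inv, zpow_natCast,
          Matrix.det_pow, hbdet, one_pow, Ring.inverse_one]
    refine ⟨posDef_of_posSemidef_det_ne_zero hpsd (by rw [hdet]; exact one_ne_zero), hdet⟩
  refine ⟨hmem a b ⟨hapd, hadet⟩ ⟨hbpd, hbdet⟩, ?_, ?_, hzmem, ?_⟩
  · show msqrt (1 * a ^ 2 * 1) = a
    rw [one_mul, mul_one]
    exact msqrt_eq hapd.posSemidef rfl
  · show msqrt (a * 1 ^ 2 * a) = a
    rw [one_pow, mul_one, ← pow_two]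
    exact msqrt_eq hapd.posSemidef rfl
  · intro k l
    have hk := hzmem k
    have hkm := hmem a (b ^ k) ⟨hapd, hadet⟩ hk
    have hsqk : mSH a (b ^ k) ^ 2 = b ^ k * a ^ 2 * b ^ k := by
      apply msqrt_sq
      have := (hapd.posSemidef.pow 2).mul_mul_conjTranspose_same (b ^ k)
      rwa [hk.1.1.eq] at this
    show msqrt (b ^ l * mSH a (b ^ k) ^ 2 * b ^ l) = msqrt (b ^ (k + l) * a ^ 2 * b ^ (k + l))
    have h1 : b ^ l * b ^ k = b ^ (k + l) := by
      rw [← Matrix.zpow_add hbdet_unit, add_comm]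
    have h2 : b ^ k * b ^ l = b ^ (k + l) := (Matrix.zpow_add hbdet_unit k l).symm
    have key : b ^ l * (b ^ k * a ^ 2 * b ^ k) * b ^ l
        = b ^ (k + l) * a ^ 2 * b ^ (k + l) := by
      calc b ^ l * (b ^ k * a ^ 2 * b ^ k) * b ^ l
          = (b ^ l * b ^ k) * a ^ 2 * (b ^ k * b ^ l) := by noncomm_ring
        _ = b ^ (k + l) * a ^ 2 * b ^ (k + l) := by rw [h1, h2]
    rw [hsqk, key]
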